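/- Let G=(V,E) be a connected simple graph with n vertices and m edges, and let g be an additive module function of G (g(X ∪ Y) = g(X) + g(Y) for disjoint X,Y) satisfying the boundary condition g(T_α) = d_α for each leaf α, where d_α is the degree of the vertex with codeword α. Then for any encoding tree T of G, the structural entropy of G with module function g given by T equals the Shannon entropy of the degree distribution: H^T_g(G) = -Σ_{i=1}^n (d_i/2m) log₂(d_i/2m). In particular, H^T_g is independent of the choice of encoding tree T. -/

import Mathlib

open Finset

open scoped Classical

/-- An encoding tree over a finite vertex set `V`: a rooted tree whose nodes carry
nonempty subsets (markers) of `V`, the root carries `V`, the markers of the children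
of any non-leaf node partition the node's marker, every non-leaf node has at least
two children, and leaves carry singletons. -/
structure EncTree (V : Type) [Fintype V] [DecidableEq V] : Type 1 where
  node : Type
  [fin : Fintype node]
  [deq : DecidableEq node]
  root : node
  parent : node → node
  parent_root : parent root = root
  depth : node → ℕ
  depth_root : depth root = 0
  depth_parent : ∀ a, a ≠ root → depth a = depth (parent a) + 1
  mark : node → Finset V
  mark_root : mark root = Finset.univ
  mark_nonempty : ∀ a, (mark a).Nonempty
  mark_subset : ∀ a, a ≠ root → mark a ⊆ mark (parent a)
  children_partition : ∀ a, (∃ b, b ≠ a ∧ parent b = a) →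
    ∀ x ∈ mark a, ∃! b, b ≠ a ∧ parent b = a ∧ x ∈ mark b
  children_two : ∀ a b, b ≠ a → parent b = a → ∃ c, c ≠ a ∧ c ≠ b ∧ parent c = a
  leaf_singleton : ∀ a, (∀ b, b ≠ a → parent b ≠ a) → (mark a).card = 1

attribute [instance] EncTree.fin EncTree.deq

namespace SiLeM

variable {V : Type} [Fintype V] [DecidableEq V]

/-- A node of an encoding tree is a leaf if it has no children. -/
def IsLeaf (T : EncTree V) (a : T.node) : Prop :=
  ∀ b, b ≠ a → T.parent b ≠ a

/-- Volume of a set of vertices: total degree. -/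
noncomputable def vol (G : SimpleGraph V) (A : Finset V) : ℝ :=
  ∑ v ∈ A, (G.degree v : ℝ)

/-- Volume of the graph: total degree of all vertices. -/
noncomputable def volG (G : SimpleGraph V) : ℝ := ∑ v : V, (G.degree v : ℝ)

/-- `g_A`: the number of edges with exactly one endpoint in `A`
(counted as ordered pairs entering `A`). -/
noncomputable def ecut (G : SimpleGraph V) (A : Finset V) : ℝ :=
  ((Finset.univ.filter
      (fun p : V × V => G.Adj p.1 p.2 ∧ p.1 ∉ A ∧ p.2 ∈ A)).card : ℝ)

/-- Structural entropy of `G` given by the encoding tree `T`. -/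
noncomputable def HT (G : SimpleGraph V) (T : EncTree V) : ℝ :=
  -∑ a ∈ Finset.univ.filter (fun a : T.node => a ≠ T.root),
      (ecut G (T.mark a) / volG G) *
        Real.logb 2 (vol G (T.mark a) / vol G (T.mark (T.parent a)))

/-- One-dimensional structural entropy: Shannon entropy of the degree distribution. -/
noncomputable def H1 (G : SimpleGraph V) : ℝ :=
  -∑ v : V, ((G.degree v : ℝ) / volG G) * Real.logb 2 ((G.degree v : ℝ) / volG G)

/-- Compressing information of `G` given by the encoding tree `T`. -/
noncomputable def CT (G : SimpleGraph V) (T : EncTree V) : ℝ :=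
  -∑ a ∈ Finset.univ.filter (fun a : T.node => a ≠ T.root),
      ((vol G (T.mark a) - ecut G (T.mark a)) / volG G) *
        Real.logb 2 (vol G (T.mark a) / vol G (T.mark (T.parent a)))

/-- Structural entropy of `G`: minimum over all encoding trees. -/
noncomputable def SE (G : SimpleGraph V) : ℝ :=
  sInf {x | ∃ T : EncTree V, x = HT G T}

/-- `k`-dimensional structural entropy: minimum over encoding trees of height ≤ k. -/
noncomputable def SEk (G : SimpleGraph V) (k : ℕ) : ℝ :=
  sInf {x | ∃ T : EncTree V, (∀ a, T.depth a ≤ k) ∧ x = HT G T}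

/-- Compressing information of `G`: maximum over all encoding trees. -/
noncomputable def CInfo (G : SimpleGraph V) : ℝ :=
  sSup {x | ∃ T : EncTree V, x = CT G T}

/-- `k`-dimensional compressing information. -/
noncomputable def Ck (G : SimpleGraph V) (k : ℕ) : ℝ :=
  sSup {x | ∃ T : EncTree V, (∀ a, T.depth a ≤ k) ∧ x = CT G T}

/-- Decoding information of `G`. -/
noncomputable def DInfo (G : SimpleGraph V) : ℝ :=
  sSup {x | ∃ T : EncTree V, x = H1 G - HT G T}

/-- `k`-dimensional decoding information. -/
noncomputable def Dk (G : SimpleGraph V) (k : ℕ) : ℝ :=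
  sSup {x | ∃ T : EncTree V, (∀ a, T.depth a ≤ k) ∧ x = H1 G - HT G T}

/-- Conductance of a subset `S`. -/
noncomputable def condS (G : SimpleGraph V) (S : Finset V) : ℝ :=
  ecut G S / min (vol G S) (vol G Sᶜ)

/-- Conductance of the graph. -/
noncomputable def conductance (G : SimpleGraph V) : ℝ :=
  sInf {x | ∃ S : Finset V, S.Nonempty ∧ S ≠ Finset.univ ∧ x = condS G S}

/-- `H̃(Y = β | X = α)` for an edge `(x, y)` with codewords `α, β`: the sum is over
the nodes `δ` with `γ ⊂ δ ⊆ β` where `γ` is the longest common initial segment of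
`α` and `β`; these are exactly the nodes whose marker contains `y` but not `x`. -/
noncomputable def Htilde (G : SimpleGraph V) (T : EncTree V) (x y : V) : ℝ :=
  -∑ a ∈ Finset.univ.filter (fun a : T.node => y ∈ T.mark a ∧ x ∉ T.mark a),
      Real.logb 2 (vol G (T.mark a) / vol G (T.mark (T.parent a)))

/-- `Ĩ(X = α; Y = β)` for an edge `(x, y)`: the sum over the nodes `δ` with
`λ ⊂ δ ⊆ γ`, i.e. the non-root nodes whose marker contains both `x` and `y`. -/
noncomputable def Itilde (G : SimpleGraph V) (T : EncTree V) (x y : V) : ℝ :=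
  -∑ a ∈ Finset.univ.filter
      (fun a : T.node => a ≠ T.root ∧ x ∈ T.mark a ∧ y ∈ T.mark a),
      Real.logb 2 (vol G (T.mark a) / vol G (T.mark (T.parent a)))

end SiLeM

/-- Structural entropy of `G` with module function `g` given by encoding tree `T`. -/
noncomputable def SiLeM.HTg {V : Type} [Fintype V] [DecidableEq V]
    (G : SimpleGraph V) (g : Finset V → ℝ) (T : EncTree V) : ℝ :=
  -∑ a ∈ Finset.univ.filter (fun a : T.node => a ≠ T.root),
      (g (T.mark a) / SiLeM.volG G) *
        Real.logb 2 (SiLeM.vol G (T.mark a) / SiLeM.vol G (T.mark (T.parent a)))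

section Aux
open SiLeM
variable {V : Type} [Fintype V] [DecidableEq V] (T : EncTree V)

lemma aux_root_of_depth_zero {a : T.node} (h : T.depth a = 0) : a = T.root := by
  by_contra hne
  rw [T.depth_parent a hne] at h
  simp at h

lemma aux_child_ne_root {b a : T.node} (hb : b ≠ a) (hp : T.parent b = a) : b ≠ T.root := by
  rintro rfl; rw [T.parent_root] at hp; exact hb hp

lemma aux_mark_subset_parent (a : T.node) : T.mark a ⊆ T.mark (T.parent a) := by
  by_cases h : a = T.root
  · subst h; rw [T.parent_root]
  · exact T.mark_subset a h

lemma aux_depth_iterate (k : ℕ) : ∀ a : T.node, k ≤ T.depth a →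
    T.depth (T.parent^[k] a) = T.depth a - k := by
  induction k with
  | zero => simp
  | succ n ih =>
    intro a hk
    have hne : a ≠ T.root := by
      intro h; subst h; rw [T.depth_root] at hk; omega
    have hd : T.depth a = T.depth (T.parent a) + 1 := T.depth_parent a hne
    rw [Function.iterate_succ_apply, ih (T.parent a) (by omega)]
    omega

lemma aux_mem_iterate {v : V} (k : ℕ) (a : T.node) (h : v ∈ T.mark a) :
    v ∈ T.mark (T.parent^[k] a) := by
  induction k with
  | zero => exact h
  | succ n ih => rw [Function.iterate_succ_apply']; exact aux_mark_subset_parent T _ ih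

lemma aux_reaches_root : ∀ (n : ℕ) (a : T.node), T.depth a = n → T.parent^[n] a = T.root := by
  intro n
  induction n with
  | zero => intro a h; simpa using aux_root_of_depth_zero T h
  | succ n ih =>
    intro a h
    have hne : a ≠ T.root := fun hr => by simp [hr, T.depth_root] at h
    rw [Function.iterate_succ_apply]
    exact ih _ (by have := T.depth_parent a hne; omega)

lemma aux_unique_at_depth {v : V} : ∀ (n : ℕ) (a b : T.node), T.depth a = n → T.depth b = n →
    v ∈ T.mark a → v ∈ T.mark b → a = b := by
  intro n
  induction n with
  | zero => intro a b ha hb _ _; rw [aux_root_of_depth_zero T ha, aux_root_of_depth_zero T hb]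
  | succ n ih =>
    intro a b ha hb hva hvb
    have hane : a ≠ T.root := fun h => by simp [h, T.depth_root] at ha
    have hbne : b ≠ T.root := fun h => by simp [h, T.depth_root] at hb
    have hpa : T.depth (T.parent a) = n := by have := T.depth_parent a hane; omega
    have hpb : T.depth (T.parent b) = n := by have := T.depth_parent b hbne; omega
    have hpp : T.parent a = T.parent b :=
      ih _ _ hpa hpb (T.mark_subset a hane hva) (T.mark_subset b hbne hvb)
    have hap : a ≠ T.parent a := fun h => by rw [← h] at hpa; omega
    have hbp : b ≠ T.parent a := fun h => by rw [h] at hb; omega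
    obtain ⟨c, _, huniq⟩ := T.children_partition (T.parent a) ⟨a, hap, rfl⟩ v
      (T.mark_subset a hane hva)
    have h1 := huniq a ⟨hap, rfl, hva⟩
    have h2 := huniq b ⟨hbp, hpp.symm, hvb⟩
    rw [h1, h2]

lemma aux_exists_leaf (v : V) : ∃ a : T.node, IsLeaf T a ∧ v ∈ T.mark a := by
  obtain ⟨a, ha, hmax⟩ := Finset.exists_max_image
    (Finset.univ.filter (fun a : T.node => v ∈ T.mark a)) T.depth
    ⟨T.root, by simp [T.mark_root]⟩
  simp only [Finset.mem_filter] at ha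
  refine ⟨a, ?_, ha.2⟩
  intro b hb hpb
  obtain ⟨c, ⟨hc1, hc2, hc3⟩, _⟩ := T.children_partition a ⟨b, hb, hpb⟩ v ha.2
  have hd : T.depth c = T.depth a + 1 := by
    rw [T.depth_parent c (aux_child_ne_root T hc1 hc2), hc2]
  have := hmax c (by simp [hc3])
  omega

lemma aux_leaf_mark {a : T.node} (ha : IsLeaf T a) {v : V} (hv : v ∈ T.mark a) :
    T.mark a = {v} := by
  obtain ⟨w, hw⟩ := Finset.card_eq_one.mp (T.leaf_singleton a ha)
  rw [hw] at hv ⊢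
  rw [Finset.mem_singleton] at hv
  rw [hv]

lemma aux_mem_leaf_depth_le {v : V} {l b : T.node} (hl : IsLeaf T l) (hvl : v ∈ T.mark l)
    (hvb : v ∈ T.mark b) :
    T.depth b ≤ T.depth l ∧ b = T.parent^[T.depth l - T.depth b] l := by
  have hle : T.depth b ≤ T.depth l := by
    by_contra hgt
    push_neg at hgt
    set k := T.depth b - T.depth l with hk
    have hk1 : 1 ≤ k := by omega
    have hdc : T.depth (T.parent^[k] b) = T.depth l := by
      rw [aux_depth_iterate T k b (by omega)]; omega
    have hcl : T.parent^[k] b = l :=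
      aux_unique_at_depth T (T.depth l) _ _ hdc rfl (aux_mem_iterate T k b hvb) hvl
    have hd' : T.depth (T.parent^[k-1] b) = T.depth l + 1 := by
      rw [aux_depth_iterate T (k-1) b (by omega)]; omega
    have hpar : T.parent (T.parent^[k-1] b) = l := by
      have h1 : T.parent^[(k-1)+1] b = T.parent (T.parent^[k-1] b) :=
        Function.iterate_succ_apply' _ _ _
      have h2 : k - 1 + 1 = k := by omega
      rw [← h1, h2, hcl]
    exact hl (T.parent^[k-1] b) (fun h => by rw [h] at hd'; omega) hpar
  refine ⟨hle, ?_⟩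
  have hdc : T.depth (T.parent^[T.depth l - T.depth b] l) = T.depth b := by
    rw [aux_depth_iterate T _ l (by omega)]; omega
  exact (aux_unique_at_depth T (T.depth b) _ _ hdc rfl
    (aux_mem_iterate T _ l hvl) hvb).symm

lemma aux_chain (v : V) {l : T.node} (hl : IsLeaf T l) (hvl : v ∈ T.mark l) :
    Finset.univ.filter (fun a : T.node => a ≠ T.root ∧ v ∈ T.mark a) =
      (Finset.range (T.depth l)).image (fun j => T.parent^[j] l) := by
  ext b
  simp only [Finset.mem_filter, Finset.mem_image, Finset.mem_range, Finset.mem_univ, true_and]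
  constructor
  · rintro ⟨hbr, hvb⟩
    obtain ⟨hle, heq⟩ := aux_mem_leaf_depth_le T hl hvl hvb
    refine ⟨T.depth l - T.depth b, ?_, heq.symm⟩
    have : T.depth b ≠ 0 := fun h => hbr (aux_root_of_depth_zero T h)
    omega
  · rintro ⟨j, hj, rfl⟩
    have hd := aux_depth_iterate T j l (by omega)
    refine ⟨?_, aux_mem_iterate T j l hvl⟩
    intro h; rw [h, T.depth_root] at hd; omega

lemma aux_telescope (L : T.node → ℝ) (v : V) {l : T.node} (hl : IsLeaf T l)
    (hvl : v ∈ T.mark l) :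
    ∑ a ∈ Finset.univ.filter (fun a : T.node => a ≠ T.root ∧ v ∈ T.mark a),
      (L a - L (T.parent a)) = L l - L T.root := by
  rw [aux_chain T v hl hvl]
  rw [Finset.sum_image (fun i hi j hj hij => by
    simp only [Finset.mem_coe, Finset.mem_range] at hi hj
    have h1 := aux_depth_iterate T i l (by omega)
    have h2 := aux_depth_iterate T j l (by omega)
    rw [hij] at h1
    omega)]
  have hcongr : ∀ j ∈ Finset.range (T.depth l),
      L (T.parent^[j] l) - L (T.parent (T.parent^[j] l)) =
        (fun j => L (T.parent^[j] l)) j - (fun j => L (T.parent^[j] l)) (j + 1) := by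
    intro j _
    simp only [Function.iterate_succ_apply']
  rw [Finset.sum_congr rfl hcongr, Finset.sum_range_sub' (fun j => L (T.parent^[j] l))]
  simp only [Function.iterate_zero_apply]
  rw [aux_reaches_root T (T.depth l) l rfl]

lemma aux_child_mark_disjoint {a b c : T.node} (hb : b ≠ a) (hpb : T.parent b = a)
    (hc : c ≠ a) (hpc : T.parent c = a) (hbc : b ≠ c) :
    Disjoint (T.mark b) (T.mark c) := by
  rw [Finset.disjoint_left]
  intro x hxb hxc
  obtain ⟨d, _, huniq⟩ := T.children_partition a ⟨b, hb, hpb⟩ x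
    (hpb ▸ aux_mark_subset_parent T b hxb)
  exact hbc ((huniq b ⟨hb, hpb, hxb⟩).trans (huniq c ⟨hc, hpc, hxc⟩).symm)

lemma aux_mark_eq_biUnion {a : T.node} (ha : ¬ SiLeM.IsLeaf T a) :
    T.mark a = (Finset.univ.filter (fun b : T.node => b ≠ a ∧ T.parent b = a)).biUnion
      T.mark := by
  have hex : ∃ b, b ≠ a ∧ T.parent b = a := by
    simp only [SiLeM.IsLeaf, not_forall] at ha
    obtain ⟨b, hb⟩ := ha
    exact ⟨b, by tauto⟩
  ext x
  simp only [Finset.mem_biUnion, Finset.mem_filter, Finset.mem_univ, true_and]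
  constructor
  · intro hx
    obtain ⟨b, ⟨h1, h2, h3⟩, _⟩ := T.children_partition a hex x hx
    exact ⟨b, ⟨h1, h2⟩, h3⟩
  · rintro ⟨b, ⟨h1, h2⟩, h3⟩
    exact h2 ▸ aux_mark_subset_parent T b h3

lemma aux_additive_biUnion {g : Finset V → ℝ}
    (hadd : ∀ X Y : Finset V, Disjoint X Y → g (X ∪ Y) = g X + g Y)
    {ι : Type} [DecidableEq ι] (B : ι → Finset V) :
    ∀ s : Finset ι, (∀ i ∈ s, ∀ j ∈ s, i ≠ j → Disjoint (B i) (B j)) →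
      g (s.biUnion B) = ∑ i ∈ s, g (B i) := by
  have h0 : g ∅ = 0 := by
    have := hadd ∅ ∅ (by simp)
    simp at this
    linarith
  intro s
  induction s using Finset.induction_on with
  | empty => simp [h0]
  | @insert i s hi ih =>
    intro hdisj
    have hdi : Disjoint (B i) (s.biUnion B) := by
      rw [Finset.disjoint_biUnion_right]
      intro j hj
      exact hdisj i (Finset.mem_insert_self i s) j (Finset.mem_insert_of_mem hj)
        (by rintro rfl; exact hi hj)
    rw [Finset.biUnion_insert, hadd _ _ hdi, Finset.sum_insert hi,
      ih (fun x hx y hy => hdisj x (Finset.mem_insert_of_mem hx) y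
        (Finset.mem_insert_of_mem hy))]

lemma aux_g_eq_vol (G : SimpleGraph V) {g : Finset V → ℝ}
    (hadd : ∀ X Y : Finset V, Disjoint X Y → g (X ∪ Y) = g X + g Y)
    (hleaf : ∀ a : T.node, SiLeM.IsLeaf T a → g (T.mark a) = SiLeM.vol G (T.mark a)) :
    ∀ (n : ℕ) (a : T.node), (T.mark a).card ≤ n → g (T.mark a) = SiLeM.vol G (T.mark a) := by
  intro n
  induction n with
  | zero =>
    intro a h
    obtain ⟨x, hx⟩ := T.mark_nonempty a
    have : (T.mark a).card = 0 := by omega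
    rw [Finset.card_eq_zero] at this
    simp [this] at hx
  | succ n ih =>
    intro a hcard
    by_cases hl : SiLeM.IsLeaf T a
    · exact hleaf a hl
    · set C := Finset.univ.filter (fun b : T.node => b ≠ a ∧ T.parent b = a) with hC
      have hdisj : ∀ b ∈ C, ∀ c ∈ C, b ≠ c → Disjoint (T.mark b) (T.mark c) := by
        intro b hb c hc hbc
        simp only [hC, Finset.mem_filter, Finset.mem_univ, true_and] at hb hc
        exact aux_child_mark_disjoint T hb.1 hb.2 hc.1 hc.2 hbc
      have hbi := aux_mark_eq_biUnion T hl
      have hlt : ∀ b ∈ C, (T.mark b).card < (T.mark a).card := by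
        intro b hb
        simp only [hC, Finset.mem_filter, Finset.mem_univ, true_and] at hb
        obtain ⟨c, hc1, hc2, hc3⟩ := T.children_two a b hb.1 hb.2
        have hsub : T.mark b ⊆ T.mark a := hb.2 ▸ aux_mark_subset_parent T b
        obtain ⟨x, hx⟩ := T.mark_nonempty c
        have hxa : x ∈ T.mark a := hc3 ▸ aux_mark_subset_parent T c hx
        have hxb : x ∉ T.mark b :=
          Finset.disjoint_right.mp
            (aux_child_mark_disjoint T hb.1 hb.2 hc1 hc3 (Ne.symm hc2)) hx
        exact Finset.card_lt_card ((Finset.ssubset_iff_of_subset hsub).mpr ⟨x, hxa, hxb⟩)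
      have hvol : SiLeM.vol G (C.biUnion T.mark) = ∑ b ∈ C, SiLeM.vol G (T.mark b) :=
        Finset.sum_biUnion (fun b hb c hc hbc => hdisj b hb c hc hbc)
      rw [hbi, aux_additive_biUnion hadd T.mark C hdisj, hvol]
      exact Finset.sum_congr rfl fun b hb => ih b (by have := hlt b hb; omega)

end Aux


/-- For an additive module function `g` with the boundary condition
`g(T_α) = d_α` at leaves, the structural entropy with module function `g` equals
the Shannon entropy of the degree distribution, for every encoding tree `T`.
(Here `2m = vol(G)`.) -/
theorem stmt3 {V : Type} [Fintype V] [DecidableEq V]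
    (G : SimpleGraph V) (hconn : G.Connected)
    (g : Finset V → ℝ) (hg0 : ∀ X : Finset V, 0 ≤ g X)
    (hadd : ∀ X Y : Finset V, Disjoint X Y → g (X ∪ Y) = g X + g Y)
    (T : EncTree V)
    (hleaf : ∀ a : T.node, SiLeM.IsLeaf T a → g (T.mark a) = SiLeM.vol G (T.mark a)) :
    SiLeM.HTg G g T =
      -∑ v : V, ((G.degree v : ℝ) / SiLeM.volG G) *
          Real.logb 2 ((G.degree v : ℝ) / SiLeM.volG G) := by
  classical
  by_cases h0 : SiLeM.volG G = 0
  · have hdeg : ∀ v : V, (G.degree v : ℝ) = 0 := by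
      intro v
      have hnn : ∀ v ∈ Finset.univ, (0:ℝ) ≤ (G.degree v : ℝ) := fun v _ => by positivity
      exact (Finset.sum_eq_zero_iff_of_nonneg hnn).mp h0 v (Finset.mem_univ v)
    simp [SiLeM.HTg, h0, hdeg]
  · have hw : ∃ w : V, 0 < G.degree w := by
      by_contra hc
      push_neg at hc
      exact h0 (Finset.sum_eq_zero fun v _ => by
        have := hc v
        have : G.degree v = 0 := by omega
        simp [this])
    obtain ⟨w, hw⟩ := hw
    obtain ⟨u, hwu⟩ := (G.degree_pos_iff_exists_adj w).mp hw
    have hcard2 : 1 < Fintype.card V := Fintype.one_lt_card_iff.mpr ⟨w, u, hwu.ne⟩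
    have hdegpos : ∀ v : V, 0 < G.degree v := by
      intro v
      rw [SimpleGraph.degree_pos_iff_exists_adj]
      obtain ⟨x, hxv⟩ := Fintype.exists_ne_of_one_lt_card hcard2 v
      obtain ⟨p⟩ := hconn.preconnected v x
      cases p with
      | nil => exact absurd rfl hxv.symm
      | cons h q => exact ⟨_, h⟩
    have hvolpos : ∀ A : Finset V, A.Nonempty → 0 < SiLeM.vol G A := by
      rintro A ⟨x, hx⟩
      exact Finset.sum_pos' (fun v _ => by positivity)
        ⟨x, hx, by exact_mod_cast hdegpos x⟩
    have hvolGpos : 0 < SiLeM.volG G := by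
      have huniv : SiLeM.volG G = SiLeM.vol G Finset.univ := rfl
      rw [huniv]
      exact hvolpos _ ⟨w, Finset.mem_univ w⟩
    set L : T.node → ℝ := fun a => Real.logb 2 (SiLeM.vol G (T.mark a)) with hL
    have hgv : ∀ a : T.node, g (T.mark a) = SiLeM.vol G (T.mark a) :=
      fun a => aux_g_eq_vol T G hadd hleaf (T.mark a).card a le_rfl
    have hlog : ∀ a : T.node,
        Real.logb 2 (SiLeM.vol G (T.mark a) / SiLeM.vol G (T.mark (T.parent a))) =
          L a - L (T.parent a) :=
      fun a => Real.logb_div (ne_of_gt (hvolpos _ (T.mark_nonempty a)))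
        (ne_of_gt (hvolpos _ (T.mark_nonempty _)))
    have step1 : ∀ a : T.node, SiLeM.vol G (T.mark a) * (L a - L (T.parent a)) =
        ∑ v : V, (if v ∈ T.mark a then (G.degree v : ℝ) * (L a - L (T.parent a)) else 0) := by
      intro a
      rw [Finset.sum_ite_mem, Finset.univ_inter, ← Finset.sum_mul]
      rfl
    have key : ∑ a ∈ Finset.univ.filter (fun a : T.node => a ≠ T.root),
        SiLeM.vol G (T.mark a) * (L a - L (T.parent a)) =
        ∑ v : V, (G.degree v : ℝ) *
          (Real.logb 2 (G.degree v) - Real.logb 2 (SiLeM.volG G)) := by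
      rw [Finset.sum_congr rfl (fun a _ => step1 a), Finset.sum_comm]
      refine Finset.sum_congr rfl (fun v _ => ?_)
      obtain ⟨l, hl, hvl⟩ := aux_exists_leaf T v
      have hLl : L l = Real.logb 2 (G.degree v) := by
        rw [hL]
        simp only []
        rw [aux_leaf_mark T hl hvl]
        simp [SiLeM.vol]
      have hLr : L T.root = Real.logb 2 (SiLeM.volG G) := by
        rw [hL]
        simp only []
        rw [T.mark_root]
        rfl
      rw [← Finset.sum_filter, Finset.filter_filter, ← Finset.mul_sum,
        aux_telescope T L v hl hvl, hLl, hLr]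
    rw [SiLeM.HTg]
    have lhs_eq : ∑ a ∈ Finset.univ.filter (fun a : T.node => a ≠ T.root),
        (g (T.mark a) / SiLeM.volG G) *
          Real.logb 2 (SiLeM.vol G (T.mark a) / SiLeM.vol G (T.mark (T.parent a))) =
        (∑ a ∈ Finset.univ.filter (fun a : T.node => a ≠ T.root),
          SiLeM.vol G (T.mark a) * (L a - L (T.parent a))) / SiLeM.volG G := by
      rw [Finset.sum_div]
      refine Finset.sum_congr rfl (fun a _ => ?_)
      rw [hgv a, hlog a]
      ring
    rw [lhs_eq, key, neg_inj, Finset.sum_div]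
    refine Finset.sum_congr rfl (fun v _ => ?_)
    rw [Real.logb_div (by exact_mod_cast (hdegpos v).ne') (ne_of_gt hvolGpos)]
    ring
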